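/- Let p be a prime, g ≥ 1, and F(t) = ∑_{j=0}^{g} p^j t^{2j} − ∑_{j=0}^{g-1} p^j t^{2j+1}. Then every complex root of F has absolute value p^{-1/2}. -/

import Mathlib

open Finset

lemma aux13 (x A B q : ℝ) (n : ℕ) (hn : n ≠ 0) (hq : 0 < q) (hx : 0 < x) (hB : 0 < B)
    (hA : A = B + q * (x - 1)) (hE : x ^ n * A = B) : x = 1 := by
  rcases lt_trichotomy x 1 with h | h | h
  · exfalso
    have hxn : x ^ n < 1 := pow_lt_one₀ hx.le h hn
    have hxn0 : 0 < x ^ n := pow_pos hx n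
    have hA0 : 0 < A := by nlinarith
    nlinarith
  · exact h
  · exfalso
    have hxn : 1 < x ^ n := one_lt_pow₀ h hn
    have hA0 : 0 < A := by nlinarith
    nlinarith [mul_pos (sub_pos.mpr hxn) hA0]

/-- The polynomial `F(t) = ∑_{j=0}^{g} p^j t^{2j} − ∑_{j=0}^{g-1} p^j t^{2j+1}`. -/
noncomputable def Ftwo (p g : ℕ) (t : ℂ) : ℂ :=
  (∑ j ∈ Finset.range (g + 1), (p : ℂ) ^ j * t ^ (2 * j))
    - ∑ j ∈ Finset.range g, (p : ℂ) ^ j * t ^ (2 * j + 1)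

/-- "Local Riemann hypothesis": every complex root of `F` has absolute value `p^{-1/2}`. -/
theorem stmt13 (p g : ℕ) (hp : p.Prime) (hg : 1 ≤ g) (z : ℂ) (hz : Ftwo p g z = 0) :
    ‖z‖ = (p : ℝ) ^ (-(1 / 2 : ℝ)) := by
  have hp2 : 2 ≤ p := hp.two_le
  have hp0 : (0:ℝ) < p := by positivity
  have hz0 : z ≠ 0 := by
    rintro rfl
    rw [show Ftwo p g 0 = 1 by
      unfold Ftwo
      rw [Finset.sum_range_succ']
      simp [Nat.mul_succ]] at hz
    exact one_ne_zero hz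
  have hz1 : z ≠ 1 := by
    rintro rfl
    rw [show Ftwo p g 1 = (p:ℂ)^g by
      unfold Ftwo
      rw [Finset.sum_range_succ]
      simp] at hz
    exact pow_ne_zero g (Nat.cast_ne_zero.mpr hp.ne_zero) hz
  -- geometric sum identity
  have hgeo : ∀ n : ℕ, (∑ j ∈ Finset.range n, (p:ℂ)^j * z^(2*j)) * ((p:ℂ)*z^2 - 1)
      = ((p:ℂ)*z^2)^n - 1 := by
    intro n
    rw [← geom_sum_mul]
    congr 1
    refine Finset.sum_congr rfl fun j _ => ?_
    rw [mul_pow, pow_mul]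
  -- key equation
  have key : (p:ℂ)^g * z^(2*g+1) * ((p:ℂ)*z - 1) = 1 - z := by
    have h0 : Ftwo p g z * ((p:ℂ)*z^2 - 1) = 0 := by rw [hz, zero_mul]
    have h1 : Ftwo p g z * ((p:ℂ)*z^2 - 1)
        = (((p:ℂ)*z^2)^(g+1) - 1) - z * (((p:ℂ)*z^2)^g - 1) := by
      have hss : (∑ j ∈ Finset.range g, (p:ℂ)^j * z^(2*j+1))
          = z * ∑ j ∈ Finset.range g, (p:ℂ)^j * z^(2*j) := by
        rw [Finset.mul_sum]
        exact Finset.sum_congr rfl fun j _ => by ring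
      unfold Ftwo
      rw [sub_mul, hgeo, hss, mul_assoc, hgeo]
    rw [h1] at h0
    have h2 : ((p:ℂ)*z^2)^(g+1) = (p:ℂ)^(g+1) * z^(2*g+2) := by ring
    have h3 : ((p:ℂ)*z^2)^g = (p:ℂ)^g * z^(2*g) := by ring
    rw [h2, h3] at h0
    have h4 : (p:ℂ)^(g+1) * z^(2*g+2) - 1 - z * ((p:ℂ)^g * z^(2*g) - 1)
        = (p:ℂ)^g * z^(2*g+1) * ((p:ℂ)*z - 1) - (1 - z) := by ring
    rw [h4] at h0
    linear_combination h0
  -- pass to norms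
  have hsp : 0 < Complex.normSq z := Complex.normSq_pos.mpr hz0
  have hB : 0 < Complex.normSq (1 - z) :=
    Complex.normSq_pos.mpr (sub_ne_zero.mpr (Ne.symm hz1))
  have E1 : ((p:ℝ) * Complex.normSq z)^(2*g+1) * Complex.normSq ((p:ℂ)*z - 1)
      = (p:ℝ) * Complex.normSq (1 - z) := by
    have := congrArg Complex.normSq key
    rw [map_mul, map_mul, map_pow, map_pow, Complex.normSq_natCast] at this
    have hpp : ((p:ℝ) * Complex.normSq z)^(2*g+1)
        = (p:ℝ) * (((p:ℝ) * (p:ℝ))^g * (Complex.normSq z)^(2*g+1)) := by ring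
    rw [hpp, mul_assoc, this]
  have E2 : Complex.normSq ((p:ℂ)*z - 1)
      = (p:ℝ) * Complex.normSq (1 - z) + ((p:ℝ) - 1) * ((p:ℝ) * Complex.normSq z - 1) := by
    simp only [Complex.normSq_apply, Complex.sub_re, Complex.sub_im, Complex.mul_re,
      Complex.mul_im, Complex.one_re, Complex.one_im, Complex.natCast_re, Complex.natCast_im]
    ring
  have hx1 : (p:ℝ) * Complex.normSq z = 1 := by
    refine aux13 _ (Complex.normSq ((p:ℂ)*z - 1)) ((p:ℝ) * Complex.normSq (1 - z))
      ((p:ℝ) - 1) (2*g+1) (by omega) ?_ (by positivity) (by positivity) E2 E1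
    have : (2:ℝ) ≤ p := by exact_mod_cast hp2
    linarith
  have hs : Complex.normSq z = (p:ℝ)⁻¹ := by field_simp at hx1 ⊢; linarith
  rw [Complex.norm_def, hs, Real.sqrt_inv, Real.rpow_neg hp0.le, ← Real.sqrt_eq_rpow]
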